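/- Let C be a triangulated category and T a contravariantly finite rigid full subcategory. Every morphism f : X → Y in C factors as X → X ⊕ ΣT₁ → Y where the first morphism is the coprojection [1,0]^t, T₁ is in T, and the second morphism [f, α] (with α : ΣT₁ → Y a right ΣT-approximation of Y) has cone factoring through Σ(T^⊥). -/

import Mathlib

open CategoryTheory CategoryTheory.Limits CategoryTheory.Pretriangulated

variable {C : Type*} [Category C] [Preadditive C] [HasZeroObject C]
  [HasShift C ℤ] [∀ n : ℤ, Functor.Additive (CategoryTheory.shiftFunctor C n)]
  [Pretriangulated C]

/-- `f` factors through an object of the set `S`. -/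
def FactorsThruSet (S : Set C) {X Y : C} (f : X ⟶ Y) : Prop :=
  ∃ U ∈ S, ∃ (a : X ⟶ U) (b : U ⟶ Y), f = a ≫ b

/-- The right perpendicular subcategory `T^⊥` of a full subcategory `T`. -/
def rperp (T : Set C) : Set C := {Z | ∀ T' ∈ T, ∀ (f : T' ⟶ Z), f = 0}

/-- The class `W` of morphisms whose connecting morphisms in any triangle factor
through `T^⊥`. -/
def Wclass (T : Set C) {X Y : C} (f : X ⟶ Y) : Prop :=
  ∀ (Z : C) (r : Z ⟶ X) (s : Y ⟶ Z⟦(1:ℤ)⟧),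
    (Triangle.mk r f s ∈ distTriang C) →
      FactorsThruSet (rperp T) r ∧ FactorsThruSet (rperp T) s

/-- A subcategory `T` is rigid if `C(T, ΣT) = 0`. -/
def IsRigid (T : Set C) : Prop :=
  ∀ T' ∈ T, ∀ T'' ∈ T, ∀ (f : T' ⟶ (T'' : C)⟦(1:ℤ)⟧), f = 0

/-- A subcategory is contravariantly finite if every object admits a right approximation. -/
def ContravariantlyFinite (T : Set C) : Prop :=
  ∀ X : C, ∃ T₀ ∈ T, ∃ (p : T₀ ⟶ X), ∀ T' ∈ T, ∀ (u : T' ⟶ X), ∃ v : T' ⟶ T₀, v ≫ p = u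
/-- `f` factors through the shift of an object of the set `S`. -/
def FactorsThruShiftSet (S : Set C) {X Y : C} (f : X ⟶ Y) : Prop :=
  ∃ U ∈ S, ∃ (a : X ⟶ (U⟦(1:ℤ)⟧)) (b : (U⟦(1:ℤ)⟧) ⟶ Y), f = a ≫ b

/-- Every morphism `f : X ⟶ Y` factors as the coprojection `X ⟶ X ⊞ ΣT₁` followed by
`[f, α]`, where `α : ΣT₁ ⟶ Y` is a right `ΣT`-approximation of `Y` and the cone of
`[f, α]` factors through `Σ(T^⊥)`. -/
theorem first_factorisation [HasBinaryBiproducts C] (T : Set C)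
    (hcf : ContravariantlyFinite T) (hrig : IsRigid T)
    {X Y : C} (f : X ⟶ Y) :
    ∃ T₁ ∈ T, ∃ (α : ((T₁ : C)⟦(1:ℤ)⟧) ⟶ Y),
      (∀ T' ∈ T, ∀ (u : ((T' : C)⟦(1:ℤ)⟧) ⟶ Y), ∃ v, v ≫ α = u) ∧
      biprod.inl ≫ biprod.desc f α = f ∧
      ∀ (Cg : C) (g : Y ⟶ Cg) (h : Cg ⟶ (X ⊞ ((T₁ : C)⟦(1:ℤ)⟧))⟦(1:ℤ)⟧),
        (Triangle.mk (biprod.desc f α) g h ∈ distTriang C) →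
          FactorsThruShiftSet (rperp T) g := by
  -- Choose a right `T`-approximation of `Y⟦-1⟧` and shift it.
  obtain ⟨T₁, hT₁, p, hp⟩ := hcf (Y⟦(-1:ℤ)⟧)
  let e : ∀ (W : C), (W⟦(-1:ℤ)⟧)⟦(1:ℤ)⟧ ≅ W := fun W =>
    (shiftFunctorCompIsoId C (-1 : ℤ) (1 : ℤ) (by omega)).app W
  let α : (T₁ : C)⟦(1:ℤ)⟧ ⟶ Y := p⟦(1:ℤ)⟧' ≫ (e Y).hom
  -- the approximation property for `α`
  have happrox : ∀ T' ∈ T, ∀ (u : ((T' : C)⟦(1:ℤ)⟧) ⟶ Y), ∃ v, v ≫ α = u := by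
    intro T' hT' u
    obtain ⟨n, hn⟩ := (shiftFunctor C (1:ℤ)).map_surjective (u ≫ (e Y).inv)
    obtain ⟨v, hv⟩ := hp T' hT' n
    refine ⟨v⟦(1:ℤ)⟧', ?_⟩
    calc v⟦(1:ℤ)⟧' ≫ α = (v ≫ p)⟦(1:ℤ)⟧' ≫ (e Y).hom := by
          simp [α, Functor.map_comp]
      _ = (u ≫ (e Y).inv) ≫ (e Y).hom := by rw [hv, hn]
      _ = u := by simp
  refine ⟨T₁, hT₁, α, happrox, by simp, ?_⟩
  intro Cg g h hTri
  -- complete `α` to a distinguished triangle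
  obtain ⟨Z, q, r, hZtri⟩ := distinguished_cocone_triangle α
  have hzero : ∀ (T' : C), T' ∈ T → ∀ (w' : (T' : C)⟦(1:ℤ)⟧ ⟶ Z), w' = 0 := by
    intro T' hT' w'
    have hw'r : w' ≫ r = 0 := by
      obtain ⟨m, hm⟩ := (shiftFunctor C (1:ℤ)).map_surjective (w' ≫ r)
      rw [← hm, hrig T' hT' T₁ hT₁ m, Functor.map_zero]
    obtain ⟨w'', hw''⟩ := Triangle.coyoneda_exact₃ _ hZtri w' hw'r
    obtain ⟨v, hv⟩ := happrox T' hT' w''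
    have hαq : α ≫ q = 0 := comp_distTriang_mor_zero₁₂ _ hZtri
    rw [hw'', ← hv]
    show (v ≫ α) ≫ q = 0
    rw [Category.assoc, hαq, comp_zero]
  -- the cone `Z` is the shift of an object of `T^⊥`
  have hZperp : (Z⟦(-1:ℤ)⟧ : C) ∈ rperp T := by
    intro T' hT' w
    have h1 : w⟦(1:ℤ)⟧' ≫ (e Z).hom = 0 := hzero _ hT' _
    have h2 : w⟦(1:ℤ)⟧' = 0 := by
      calc w⟦(1:ℤ)⟧' = (w⟦(1:ℤ)⟧' ≫ (e Z).hom) ≫ (e Z).inv := by simp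
        _ = 0 := by rw [h1]; simp
    exact (shiftFunctor C (1:ℤ)).map_injective (by simpa using h2)
  -- `g` kills `α`, hence factors through `Z`
  have hαg : α ≫ g = 0 := by
    have h0 : biprod.desc f α ≫ g = 0 := comp_distTriang_mor_zero₁₂ _ hTri
    have : (biprod.inr : (T₁ : C)⟦(1:ℤ)⟧ ⟶ X ⊞ _) ≫ biprod.desc f α ≫ g = 0 := by
      rw [h0, comp_zero]
    simpa using this
  obtain ⟨b, hb⟩ := Triangle.yoneda_exact₂ _ hZtri g hαg
  obtain ⟨b', hb'⟩ : ∃ b' : Z ⟶ Cg, g = q ≫ b' := ⟨b, hb⟩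
  exact ⟨Z⟦(-1:ℤ)⟧, hZperp, q ≫ (e Z).inv, (e Z).hom ≫ b', by simpa using hb'⟩
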